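/- Let (Ω, F, 𝕡) be a probability space with filtration (F_n)_{n∈ℕ}, let M > 0 and δ > M, and let P : ℝ → ℝ be continuous, positive and antitone on (0,∞). Let D be a Borel probability measure on ℝ supported in [-M, M] with zero mean. For each n let s_n : Ω → ℝ be F_n-measurable with s_n ≥ δ, and let η_n : Ω → ℝ be F_{n+1}-measurable, independent of F_n, with law D. Define the noise fee Γ(s) = ∫ ( ∫_{s+η}^{s} (P(a) − P(s)) da ) dD(η) and, for a fixed true price p̂ ∈ ℝ, the excess-profit process M_n = Σ_{i < n} ( −Γ(s_i) + ∫_{s_i+η_i}^{s_i} (P(a) − p̂) da ). Then (M_n) is a martingale with respect to (F_n) with M_0 = 0, and consequently 𝔼[M_τ] = 0 for every bounded stopping time τ. (This is the core of the theorem that, with privacy fee equal to the noise fee, a zero-mean noisy CFMM mechanism is truthful: no adaptive, finitely-bounded trading strategy gains in expectation from the noise trades.) -/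

import Mathlib

open MeasureTheory intervalIntegral ProbabilityTheory

section NoisyCfmmAux

open Set Filter Topology

lemma indicator_measurable_of_continuousOn {s : Set ℝ} (hs : MeasurableSet s)
    {g : ℝ → ℝ} (hg : ContinuousOn g s) : Measurable (s.indicator g) := by
  classical
  rw [← Set.piecewise_eq_indicator]
  exact hg.measurable_piecewise continuousOn_const hs

lemma meas_comp_intervalIntegral
    {Ω : Type*} {m : MeasurableSpace Ω}
    {δ : ℝ} (hδ0 : 0 < δ) {f : ℝ → ℝ} (hf : ContinuousOn f (Set.Ioi 0))
    {w v : Ω → ℝ} (hw : Measurable[m] w) (hv : Measurable[m] v)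
    (hv' : ∀ ω, δ ≤ v ω) :
    Measurable[m] fun ω => ∫ a in (w ω)..(v ω), f a := by
  classical
  have huIcc : ∀ {a b : ℝ}, 0 < a → 0 < b → uIcc a b ⊆ Ioi 0 := by
    intro a b ha hb x hx
    exact lt_of_lt_of_le (lt_min ha hb) hx.1
  have hfint : ∀ {a b : ℝ}, 0 < a → 0 < b → IntervalIntegrable f volume a b := by
    intro a b ha hb
    exact (hf.mono (huIcc ha hb)).intervalIntegrable
  set Ψ : ℝ → ℝ := fun t => ∫ a in δ..t, f a with hΨdef
  have hΨ : ∀ t ∈ Ioi (0:ℝ), ContinuousAt Ψ t := by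
    intro t ht
    simp only [mem_Ioi] at ht
    have h2 : (0:ℝ) < t/2 := by linarith
    refine ContinuousWithinAt.continuousAt (s := Icc (t/2) (t+1)) ?_
      (Icc_mem_nhds (by linarith) (by linarith))
    refine intervalIntegral.continuousWithinAt_primitive (measure_singleton t) ?_
    exact hfint (lt_min hδ0 h2) (lt_of_lt_of_le hδ0 (le_max_left _ _))
  have hΨon : ContinuousOn Ψ (Ioi 0) := fun t ht => (hΨ t ht).continuousWithinAt
  have hΨM : Continuous fun t => Ψ (max t δ) := by
    have := hΨon.comp_continuous (continuous_id.max continuous_const)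
      (fun x => mem_Ioi.2 (lt_of_lt_of_le hδ0 (le_max_right _ _)))
    exact this
  set ΨM : ℝ → ℝ := fun t => Ψ (max t δ) with hΨMdef
  set Ψind : ℝ → ℝ := (Ioi (0:ℝ)).indicator Ψ with hΨinddef
  have hΨindm : Measurable Ψind := indicator_measurable_of_continuousOn measurableSet_Ioi hΨon
  -- value on region 1
  have hreg1 : ∀ ω, 0 < w ω → (∫ a in (w ω)..(v ω), f a) = ΨM (v ω) - Ψind (w ω) := by
    intro ω hω
    have hv0 : (0:ℝ) < v ω := lt_of_lt_of_le hδ0 (hv' ω)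
    have hadd := intervalIntegral.integral_add_adjacent_intervals (a := w ω) (b := δ) (c := v ω)
      (μ := volume) (f := f) (hfint hω hδ0) (hfint hδ0 hv0)
    have h1 : ΨM (v ω) = Ψ (v ω) := by
      simp only [hΨMdef]; rw [max_eq_left (hv' ω)]
    have h2 : Ψind (w ω) = Ψ (w ω) := indicator_of_mem hω _
    rw [h1, h2, hΨdef]
    simp only []
    rw [← hadd, integral_symm δ (w ω)]
    ring
  by_cases hI0 : IntegrableOn f (Set.Ioc 0 δ) volume
  · -- f integrable near 0⁺
    set c₀ : ℝ := ∫ t in Set.Ioc (0:ℝ) δ, f t with hc₀def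
    set I : Set ℝ := {u : ℝ | u ≤ 0 ∧ IntegrableOn f (Set.Ioc u 0) volume} with hIdef
    have hIord : I.OrdConnected := by
      constructor
      intro x hx y hy z hz
      exact ⟨hz.2.trans hy.1, hx.2.mono_set (Ioc_subset_Ioc_left hz.1)⟩
    have hImeas : MeasurableSet I := hIord.measurableSet
    set h : ℝ → ℝ := fun u => ∫ t in Set.Ioc u 0, f t with hhdef
    have hcont : ContinuousOn h I := by
      intro u₀ hu₀
      obtain ⟨w₀, hw₀I, hev⟩ : ∃ w₀ ∈ I, ∀ᶠ u in 𝓝[I] u₀, w₀ ≤ u := by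
        by_cases hex : ∃ w₀ ∈ I, w₀ < u₀
        · obtain ⟨w₀, hw₀I, hlt⟩ := hex
          refine ⟨w₀, hw₀I, ?_⟩
          filter_upwards [eventually_nhdsWithin_of_eventually_nhds
            (eventually_gt_nhds hlt)] with u hu
          exact hu.le
        · push_neg at hex
          refine ⟨u₀, hu₀, ?_⟩
          filter_upwards [eventually_mem_nhdsWithin] with u hu
          exact hex u hu
      have key : ContinuousWithinAt
          (fun u => ∫ t, (Set.Ioc u 0).indicator f t ∂volume) I u₀ := by
        apply continuousWithinAt_of_dominated
          (bound := fun t => ‖(Set.Ioc w₀ 0).indicator f t‖)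
        · filter_upwards [eventually_mem_nhdsWithin] with u hu
          exact ((integrable_indicator_iff measurableSet_Ioc).2 hu.2).aestronglyMeasurable
        · filter_upwards [hev] with u hu
          refine Eventually.of_forall fun t => ?_
          by_cases ht : t ∈ Set.Ioc u 0
          · rw [indicator_of_mem ht, indicator_of_mem (Ioc_subset_Ioc_left hu ht)]
          · rw [indicator_of_notMem ht]
            simp
        · exact ((integrable_indicator_iff measurableSet_Ioc).2 hw₀I.2).norm
        · refine Eventually.mono (compl_mem_ae_iff.2 (Real.volume_singleton (a := u₀))) ?_
          intro t ht
          simp only [mem_compl_iff, mem_singleton_iff] at ht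
          apply ContinuousAt.continuousWithinAt
          rcases lt_or_gt_of_ne ht with h1 | h1
          · -- t < u₀ : locally, t ∉ Ioc u 0
            refine Filter.EventuallyEq.continuousAt (y := 0) ?_
            filter_upwards [eventually_gt_nhds h1] with u hu
            exact indicator_of_notMem (fun hc => absurd hc.1 (not_lt.2 hu.le)) _
          · -- u₀ < t : locally constant value
            refine Filter.EventuallyEq.continuousAt (y := if t ≤ 0 then f t else 0) ?_
            filter_upwards [eventually_lt_nhds h1] with u hu
            by_cases ht0 : t ≤ 0
            · rw [if_pos ht0]
              exact indicator_of_mem (show t ∈ Set.Ioc u 0 from ⟨hu, ht0⟩) f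
            · rw [indicator_of_notMem (fun hc => ht0 hc.2), if_neg ht0]
      refine key.congr (fun u hu => ?_) ?_
      · simp only [hhdef]
        rw [MeasureTheory.integral_indicator measurableSet_Ioc]
      · simp only [hhdef]
        rw [MeasureTheory.integral_indicator measurableSet_Ioc]
    have hhind : Measurable (I.indicator h) := indicator_measurable_of_continuousOn hImeas hcont
    -- the candidate measurable function
    set g : Ω → ℝ := fun ω =>
      if 0 < w ω then ΨM (v ω) - Ψind (w ω)
      else (w ⁻¹' I).indicator (fun ω' => I.indicator h (w ω') + (c₀ + ΨM (v ω'))) ω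
      with hgdef
    have hgm : Measurable[m] g := by
      refine Measurable.ite (hw measurableSet_Ioi) ((hΨM.measurable.comp hv).sub
        (hΨindm.comp hw)) ?_
      exact Measurable.indicator (((hhind.comp hw).add
        (measurable_const.add (hΨM.measurable.comp hv)))) (hw hImeas)
    have : (fun ω => ∫ a in (w ω)..(v ω), f a) = g := by
      funext ω
      simp only [hgdef]
      by_cases hω : 0 < w ω
      · rw [if_pos hω, hreg1 ω hω]
      · rw [if_neg hω]
        push_neg at hω
        have hv0 : (0:ℝ) < v ω := lt_of_lt_of_le hδ0 (hv' ω)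
        by_cases hωI : w ω ∈ I
        · rw [Set.indicator_of_mem (show ω ∈ w ⁻¹' I from hωI)]
          rw [Set.indicator_of_mem hωI]
          have hIocδv : IntegrableOn f (Set.Ioc δ (v ω)) volume := by
            refine ((hf.mono ?_).integrableOn_Icc).mono_set Ioc_subset_Icc_self
            intro x hx; exact lt_of_lt_of_le hδ0 hx.1
          have hIocv : IntegrableOn f (Set.Ioc 0 (v ω)) volume := by
            have := hI0.union hIocδv
            rwa [Set.Ioc_union_Ioc_eq_Ioc hδ0.le (hv' ω)] at this
          have hsplit : (∫ a in (w ω)..(v ω), f a)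
              = (∫ t in Set.Ioc (w ω) 0, f t) + ∫ t in Set.Ioc (0:ℝ) (v ω), f t := by
            rw [integral_of_le (hω.trans hv0.le)]
            rw [← Set.Ioc_union_Ioc_eq_Ioc hω hv0.le]
            exact setIntegral_union (Set.Ioc_disjoint_Ioc_of_le le_rfl)
              measurableSet_Ioc hωI.2 hIocv
          have hsplit2 : (∫ t in Set.Ioc (0:ℝ) (v ω), f t) = c₀ + Ψ (v ω) := by
            rw [← Set.Ioc_union_Ioc_eq_Ioc hδ0.le (hv' ω),
              setIntegral_union (Set.Ioc_disjoint_Ioc_of_le le_rfl) measurableSet_Ioc hI0 hIocδv,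
              hΨdef]
            simp only [hc₀def]
            rw [intervalIntegral.integral_of_le (hv' ω)]
          rw [hsplit, hsplit2]
          have hMv : ΨM (v ω) = Ψ (v ω) := by
            simp only [hΨMdef]; rw [max_eq_left (hv' ω)]
          rw [hMv, hhdef]
        · rw [Set.indicator_of_notMem (show ω ∉ w ⁻¹' I from hωI)]
          apply intervalIntegral.integral_undef
          intro hc
          rw [intervalIntegrable_iff_integrableOn_Ioc_of_le (hω.trans hv0.le)] at hc
          exact hωI ⟨hω, hc.mono_set (Set.Ioc_subset_Ioc_right hv0.le)⟩
    rw [this]; exact hgm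
  · -- f not integrable near 0⁺: the integral vanishes on region 2
    set g : Ω → ℝ := fun ω => if 0 < w ω then ΨM (v ω) - Ψind (w ω) else 0 with hgdef
    have hgm : Measurable[m] g :=
      Measurable.ite (hw measurableSet_Ioi)
        ((hΨM.measurable.comp hv).sub (hΨindm.comp hw)) measurable_const
    have : (fun ω => ∫ a in (w ω)..(v ω), f a) = g := by
      funext ω
      simp only [hgdef]
      by_cases hω : 0 < w ω
      · rw [if_pos hω, hreg1 ω hω]
      · rw [if_neg hω]
        push_neg at hω
        have hv0 : (0:ℝ) < v ω := lt_of_lt_of_le hδ0 (hv' ω)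
        apply intervalIntegral.integral_undef
        intro hc
        rw [intervalIntegrable_iff_integrableOn_Ioc_of_le (hω.trans hv0.le)] at hc
        exact hI0 (hc.mono_set (Set.Ioc_subset_Ioc hω (hv' ω)))
    rw [this]; exact hgm


lemma key_setIntegral_zero
    {Ω : Type*} {m0 : MeasurableSpace Ω} (prob : Measure Ω) [IsProbabilityMeasure prob]
    {mi : MeasurableSpace Ω} (hle : mi ≤ m0)
    (D : Measure ℝ) [IsProbabilityMeasure D]
    {F : ℝ × ℝ → ℝ} (hF : Continuous F) {C : ℝ} (hC : 0 ≤ C)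
    {sX : Ω → ℝ} (hsX : Measurable[mi] sX)
    {ηX : Ω → ℝ} (hηX : Measurable[m0] ηX)
    (hindep : Indep (MeasurableSpace.comap ηX (borel ℝ)) mi prob)
    (hlaw : @Measure.map Ω ℝ m0 _ ηX prob = D)
    {Mset : Set ℝ} (hMset : MeasurableSet Mset)
    (hae : ∀ᵐ e ∂D, e ∈ Mset)
    (hbd : ∀ x e, e ∈ Mset → |F (x, e)| ≤ C)
    (hzero : ∀ x, ∫ e, F (x, e) ∂D = 0)
    {A : Set Ω} (hA : MeasurableSet[mi] A) :
    ∫ ω in A, F (sX ω, ηX ω) ∂prob = 0 := by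
  classical
  have hAm0 : MeasurableSet[m0] A := hle A hA
  have hid : @Measurable Ω Ω m0 mi id := measurable_id'' hle
  set ρ : @Measure Ω mi := @Measure.map Ω Ω m0 mi id prob with hρdef
  haveI hρprob : IsProbabilityMeasure ρ := Measure.isProbabilityMeasure_map hid.aemeasurable
  have hindep' : @IndepFun Ω ℝ Ω m0 _ mi ηX id prob := by
    rw [IndepFun_iff_Indep, MeasurableSpace.comap_id]
    exact hindep
  have hmap : @Measure.map Ω (ℝ × Ω) m0 inferInstance (fun ω => (ηX ω, ω)) prob
      = D.prod ρ := by
    have h := (@indepFun_iff_map_prod_eq_prod_map_map Ω ℝ Ω m0 prob ηX id _ mi _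
      hηX.aemeasurable hid.aemeasurable).1 hindep'
    rw [hlaw] at h
    exact h
  set G : ℝ × Ω → ℝ := fun p =>
    Set.indicator (Prod.snd ⁻¹' A) (fun q => F (sX q.2, q.1)) p with hGdef
  have hGmeas : Measurable G := by
    refine Measurable.indicator ?_ (measurable_snd hA)
    have hpairm : Measurable (fun p : ℝ × Ω => (sX p.2, p.1)) :=
      (hsX.comp measurable_snd).prodMk measurable_fst
    exact hF.measurable.comp hpairm
  have hpair : @Measurable Ω (ℝ × Ω) m0 _ (fun ω => (ηX ω, ω)) := hηX.prodMk hid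
  have hae1 : ∀ᵐ p ∂(D.prod ρ), p.1 ∈ Mset := by
    rw [ae_iff]
    have hset : {p : ℝ × Ω | ¬ p.1 ∈ Mset} = Msetᶜ ×ˢ Set.univ := by
      ext p
      simp [Set.mem_prod]
    rw [hset, Measure.prod_prod]
    have hD0 : D Msetᶜ = 0 := by
      have h := ae_iff.1 hae
      exact h
    rw [hD0, zero_mul]
  have hGint : Integrable G (D.prod ρ) := by
    refine Integrable.mono' (integrable_const C) hGmeas.aestronglyMeasurable ?_
    filter_upwards [hae1] with p hp
    by_cases hpA : p.2 ∈ A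
    · simp only [hGdef]
      rw [Set.indicator_of_mem (show p ∈ Prod.snd ⁻¹' A from hpA), Real.norm_eq_abs]
      exact hbd _ _ hp
    · simp only [hGdef]
      rw [Set.indicator_of_notMem (show p ∉ Prod.snd ⁻¹' A from hpA)]
      simpa using hC
  calc ∫ ω in A, F (sX ω, ηX ω) ∂prob
      = ∫ ω, Set.indicator A (fun ω' => F (sX ω', ηX ω')) ω ∂prob :=
        (@MeasureTheory.integral_indicator Ω ℝ m0 _ _ _ _ prob hAm0).symm
    _ = ∫ ω, G (ηX ω, ω) ∂prob := by
        refine congrArg (fun h : Ω → ℝ => ∫ ω, h ω ∂prob) ?_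
        funext ω
        by_cases hωA : ω ∈ A
        · rw [Set.indicator_of_mem hωA]
          simp only [hGdef]
          rw [Set.indicator_of_mem (show ((ηX ω, ω) : ℝ × Ω) ∈ Prod.snd ⁻¹' A from hωA)]
        · rw [Set.indicator_of_notMem hωA]
          simp only [hGdef]
          rw [Set.indicator_of_notMem (show ((ηX ω, ω) : ℝ × Ω) ∉ Prod.snd ⁻¹' A from hωA)]
    _ = ∫ p, G p ∂(@Measure.map Ω (ℝ × Ω) m0 inferInstance (fun ω => (ηX ω, ω)) prob) :=
        (MeasureTheory.integral_map hpair.aemeasurable hGmeas.aestronglyMeasurable).symm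
    _ = ∫ p, G p ∂(D.prod ρ) := by rw [hmap]
    _ = ∫ ω', ∫ e, G (e, ω') ∂D ∂ρ := MeasureTheory.integral_prod_symm G hGint
    _ = 0 := by
        have hin : ∀ ω', (∫ e, G (e, ω') ∂D) = 0 := by
          intro ω'
          by_cases hωA : ω' ∈ A
          · have heq : (fun e => G (e, ω')) = fun e => F (sX ω', e) := by
              funext e
              simp only [hGdef]
              exact Set.indicator_of_mem
                (show ((e, ω') : ℝ × Ω) ∈ Prod.snd ⁻¹' A from hωA) _
            rw [heq, hzero]
          · have heq : (fun e => G (e, ω')) = fun _ => (0:ℝ) := by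
              funext e
              simp only [hGdef]
              exact Set.indicator_of_notMem
                (show ((e, ω') : ℝ × Ω) ∉ Prod.snd ⁻¹' A from hωA) _
            rw [heq, MeasureTheory.integral_zero]
        simp only [hin, MeasureTheory.integral_zero]

end NoisyCfmmAux

set_option maxHeartbeats 1000000 in
/-- With privacy fee equal to the noise fee, the excess-profit process of an
adaptive arbitrageur trading against a zero-mean noisy CFMM is a martingale
starting at `0`; hence by optional stopping its expectation is `0` at every
bounded stopping time.  This is the core of the truthfulness theorem. -/
theorem noisy_cfmm_excess_profit_martingale
    {Ω : Type*} {m0 : MeasurableSpace Ω} (prob : Measure Ω) [IsProbabilityMeasure prob]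
    (ℱ : Filtration ℕ m0)
    (M δ : ℝ) (hM : 0 < M) (hδ : M < δ)
    (P : ℝ → ℝ)
    (hPcont : ContinuousOn P (Set.Ioi 0))
    (hPpos : ∀ x ∈ Set.Ioi (0 : ℝ), 0 < P x)
    (hPanti : AntitoneOn P (Set.Ioi 0))
    (D : Measure ℝ) [IsProbabilityMeasure D]
    (hsupp : ∀ᵐ e ∂D, e ∈ Set.Icc (-M) M)
    (hmean : ∫ e, e ∂D = 0)
    (s : ℕ → Ω → ℝ)
    (hs_meas : ∀ n, Measurable[ℱ n] (s n))
    (hs_ge : ∀ n ω, δ ≤ s n ω)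
    (η : ℕ → Ω → ℝ)
    (hη_meas : ∀ n, Measurable[ℱ (n + 1)] (η n))
    (hη_indep : ∀ n, Indep (MeasurableSpace.comap (η n) (borel ℝ)) (ℱ n) prob)
    (hη_law : ∀ n, Measure.map (η n) prob = D)
    (Γ : ℝ → ℝ)
    (hΓ : ∀ x : ℝ, Γ x = ∫ e, (∫ a in (x + e)..x, (P a - P x)) ∂D)
    (phat : ℝ)
    (Mex : ℕ → Ω → ℝ)
    (hMex : ∀ n ω, Mex n ω = ∑ i ∈ Finset.range n,
      (-Γ (s i ω) + ∫ a in (s i ω + η i ω)..(s i ω), (P a - phat))) :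
    Martingale Mex ℱ prob ∧ (∀ ω, Mex 0 ω = 0) ∧
      ∀ τ : Ω → ℕ, IsStoppingTime ℱ (fun ω => (τ ω : WithTop ℕ)) → (∃ N : ℕ, ∀ ω, τ ω ≤ N) →
        ∫ ω, Mex (τ ω) ω ∂prob = 0 := by
  classical
  have hδ0 : 0 < δ := hM.trans hδ
  have hδM : (0:ℝ) < δ - M := by linarith
  have hη_m0 : ∀ n, Measurable (η n) := fun n => (hη_meas n).mono (ℱ.le _) le_rfl
  have hs_m0 : ∀ n, Measurable (s n) := fun n => (hs_meas n).mono (ℱ.le _) le_rfl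
  -- the clamped price function and its primitive
  set Q : ℝ → ℝ := fun a => P (max a (δ - M)) with hQdef
  have hQcont : Continuous Q :=
    hPcont.comp_continuous (continuous_id.max continuous_const)
      (fun x => Set.mem_Ioi.2 (lt_of_lt_of_le hδM (le_max_right _ _)))
  set C₀ : ℝ := P (δ - M) with hC₀def
  have hC₀pos : 0 < C₀ := hPpos _ hδM
  have hQpos : ∀ a, 0 < Q a := fun a =>
    hPpos _ (Set.mem_Ioi.2 (lt_of_lt_of_le hδM (le_max_right _ _)))
  have hQle : ∀ a, ‖Q a‖ ≤ C₀ := by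
    intro a
    rw [Real.norm_eq_abs, abs_of_pos (hQpos a)]
    exact hPanti hδM (Set.mem_Ioi.2 (lt_of_lt_of_le hδM (le_max_right _ _))) (le_max_right _ _)
  set Φ : ℝ → ℝ := fun t => ∫ a in (δ - M)..t, Q a with hΦdef
  have hΦcont : Continuous Φ :=
    intervalIntegral.continuous_primitive (fun a b => hQcont.intervalIntegrable a b) _
  have hΦdiff : ∀ a b : ℝ, (∫ x in a..b, Q x) = Φ b - Φ a := by
    intro a b
    have h := intervalIntegral.integral_add_adjacent_intervals (a := δ - M) (b := a) (c := b) (μ := volume)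
      (f := Q) (hQcont.intervalIntegrable _ _) (hQcont.intervalIntegrable _ _)
    simp only [hΦdef]
    linarith
  have hΦlip : ∀ a b : ℝ, |Φ b - Φ a| ≤ C₀ * |b - a| := by
    intro a b
    rw [← hΦdiff]
    have h := intervalIntegral.norm_integral_le_of_norm_le_const (a := a) (b := b) (C := C₀)
      (f := Q) (fun x _ => hQle x)
    simpa [Real.norm_eq_abs] using h
  -- integrability facts over D
  have habs : ∀ᵐ e ∂D, |e| ≤ M := by
    filter_upwards [hsupp] with e he
    exact abs_le.2 ⟨he.1, he.2⟩
  have he_int : Integrable (fun e : ℝ => e) D := by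
    refine Integrable.mono' (integrable_const M) measurable_id.aestronglyMeasurable ?_
    filter_upwards [habs] with e he
    simpa using he
  have hΦe_int : ∀ x : ℝ, Integrable (fun e => Φ (x + e)) D := by
    intro x
    refine Integrable.mono' (integrable_const (|Φ x| + C₀ * M))
      ((hΦcont.comp (continuous_const.add continuous_id)).aestronglyMeasurable) ?_
    filter_upwards [habs] with e he
    have h1 : |Φ (x + e) - Φ x| ≤ C₀ * |e| := by simpa using hΦlip x (x + e)
    have h2 : |Φ (x + e)| ≤ |Φ (x + e) - Φ x| + |Φ x| := by
      calc |Φ (x + e)| = |(Φ (x + e) - Φ x) + Φ x| := by congr 1; ring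
        _ ≤ |Φ (x + e) - Φ x| + |Φ x| := abs_add_le _ _
    have h4 : C₀ * |e| ≤ C₀ * M := by nlinarith [hC₀pos.le]
    rw [Real.norm_eq_abs]
    linarith
  set ΦD : ℝ → ℝ := fun x => ∫ e, Φ (x + e) ∂D with hΦDdef
  have hΦDlip : ∀ x y : ℝ, |ΦD x - ΦD y| ≤ C₀ * |x - y| := by
    intro x y
    have h0 : ΦD x - ΦD y = ∫ e, (Φ (x + e) - Φ (y + e)) ∂D :=
      (MeasureTheory.integral_sub (hΦe_int x) (hΦe_int y)).symm
    rw [h0]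
    have hb : ∀ᵐ e ∂D, ‖Φ (x + e) - Φ (y + e)‖ ≤ C₀ * |x - y| := by
      refine Filter.Eventually.of_forall fun e => ?_
      rw [Real.norm_eq_abs]
      have h := hΦlip (y + e) (x + e)
      have h2 : (x + e) - (y + e) = x - y := by ring
      rwa [h2] at h
    have h := MeasureTheory.norm_integral_le_of_norm_le (integrable_const (C₀ * |x - y|)) hb
    rw [MeasureTheory.integral_const] at h
    simpa [measure_univ, Real.norm_eq_abs] using h
  have hΦDcont : Continuous ΦD := by
    refine LipschitzWith.continuous (K := ⟨C₀, hC₀pos.le⟩)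
      (LipschitzWith.of_dist_le_mul fun x y => ?_)
    rw [Real.dist_eq, Real.dist_eq]
    exact hΦDlip x y
  -- key interval-integral computation
  have hkeyint : ∀ (c x e : ℝ), δ ≤ x → e ∈ Set.Icc (-M) M →
      (∫ a in (x + e)..x, (P a - c)) = Φ x - Φ (x + e) + c * e := by
    intro c x e hx he
    have hsub : Set.uIcc (x + e) x ⊆ Set.Ici (δ - M) := by
      intro t ht
      have h1 : min (x + e) x ≤ t := ht.1
      have h2 : δ - M ≤ min (x + e) x := le_min (by linarith [he.1]) (by linarith)
      exact le_trans h2 h1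
    have hcongr : Set.EqOn (fun a => P a - c) (fun a => Q a - c) (Set.uIcc (x + e) x) := by
      intro a ha
      have haM : δ - M ≤ a := hsub ha
      simp only [hQdef]
      rw [max_eq_left haM]
    rw [intervalIntegral.integral_congr hcongr,
      intervalIntegral.integral_sub (hQcont.intervalIntegrable _ _) intervalIntegrable_const,
      hΦdiff (x + e) x, intervalIntegral.integral_const]
    simp only [smul_eq_mul]
    ring
  -- the noise fee in closed form
  have hΓ' : ∀ x : ℝ, δ ≤ x → Γ x = Φ x - ΦD x := by
    intro x hx
    rw [hΓ x]
    have hae : (fun e => ∫ a in (x + e)..x, (P a - P x))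
        =ᵐ[D] fun e => Φ x - Φ (x + e) + P x * e := by
      filter_upwards [hsupp] with e he
      exact hkeyint (P x) x e hx he
    have hint2 : Integrable (fun e => Φ x - Φ (x + e)) D := by
      exact (integrable_const (Φ x)).sub (hΦe_int x)
    have hint3 : Integrable (fun e => P x * e) D := by
      exact he_int.const_mul (P x)
    rw [MeasureTheory.integral_congr_ae hae,
      MeasureTheory.integral_add hint2 hint3,
      MeasureTheory.integral_sub (integrable_const (Φ x)) (hΦe_int x),
      MeasureTheory.integral_const_mul, hmean, MeasureTheory.integral_const]
    simp [measure_univ]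
    rfl
  -- the mean-zero property of the compensated increment
  have hzero : ∀ x : ℝ, (∫ e, (ΦD x - Φ (x + e) + phat * e) ∂D) = 0 := by
    intro x
    have hint2 : Integrable (fun e => ΦD x - Φ (x + e)) D := by
      exact (integrable_const (ΦD x)).sub (hΦe_int x)
    have hint3 : Integrable (fun e => phat * e) D := by
      exact he_int.const_mul phat
    rw [MeasureTheory.integral_add hint2 hint3,
      MeasureTheory.integral_sub (integrable_const (ΦD x)) (hΦe_int x),
      MeasureTheory.integral_const_mul, hmean, MeasureTheory.integral_const]
    simp [measure_univ]
    exact sub_self _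
  -- uniform bound on the compensated increment
  set C₂ : ℝ := C₀ * M + (C₀ * M + |phat| * M) with hC₂def
  have hC₂nonneg : 0 ≤ C₂ := by
    have := abs_nonneg phat
    nlinarith [hC₀pos.le, hM.le]
  have hFbd : ∀ x e : ℝ, |e| ≤ M → |ΦD x - Φ (x + e) + phat * e| ≤ C₂ := by
    intro x e he
    have h1 : |ΦD x - Φ x| ≤ C₀ * M := by
      have hrepr : ΦD x - Φ x = ∫ e', (Φ (x + e') - Φ x) ∂D := by
        rw [MeasureTheory.integral_sub (hΦe_int x) (integrable_const (Φ x)),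
          MeasureTheory.integral_const]
        simp [measure_univ]
        rfl
      rw [hrepr]
      have hb : ∀ᵐ e' ∂D, ‖Φ (x + e') - Φ x‖ ≤ C₀ * M := by
        filter_upwards [habs] with e' he'
        rw [Real.norm_eq_abs]
        have h2 : |Φ (x + e') - Φ x| ≤ C₀ * |e'| := by simpa using hΦlip x (x + e')
        nlinarith [abs_nonneg e', hC₀pos.le]
      have h := MeasureTheory.norm_integral_le_of_norm_le (integrable_const (C₀ * M)) hb
      rw [MeasureTheory.integral_const] at h
      simpa [measure_univ, Real.norm_eq_abs] using h
    have h2 : |Φ x - Φ (x + e)| ≤ C₀ * M := by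
      have h3 : |Φ x - Φ (x + e)| ≤ C₀ * |e| := by
        have h := hΦlip (x + e) x
        have h4 : |x - (x + e)| = |e| := by
          rw [show x - (x + e) = -e by ring, abs_neg]
        rwa [h4] at h
      nlinarith [abs_nonneg e, hC₀pos.le]
    have h3 : |phat * e| ≤ |phat| * M := by
      rw [abs_mul]
      nlinarith [abs_nonneg phat]
    have h5 : |ΦD x - Φ (x + e)| ≤ |ΦD x - Φ x| + |Φ x - Φ (x + e)| := by
      calc |ΦD x - Φ (x + e)| = |(ΦD x - Φ x) + (Φ x - Φ (x + e))| := by congr 1; ring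
        _ ≤ |ΦD x - Φ x| + |Φ x - Φ (x + e)| := abs_add_le _ _
    calc |ΦD x - Φ (x + e) + phat * e| ≤ |ΦD x - Φ (x + e)| + |phat * e| := abs_add_le _ _
      _ ≤ C₂ := by rw [hC₂def]; linarith
  -- the compensated increment process
  set X : ℕ → Ω → ℝ := fun i ω => ΦD (s i ω) - Φ (s i ω + η i ω) + phat * η i ω with hXdef
  have hηIcc : ∀ i, ∀ᵐ ω ∂prob, η i ω ∈ Set.Icc (-M) M := by
    intro i
    have h : ∀ᵐ e ∂(Measure.map (η i) prob), e ∈ Set.Icc (-M) M := by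
      rw [hη_law i]; exact hsupp
    exact (ae_map_iff (hη_m0 i).aemeasurable measurableSet_Icc).1 h
  have hηIcc_all : ∀ᵐ ω ∂prob, ∀ i, η i ω ∈ Set.Icc (-M) M := ae_all_iff.2 hηIcc
  have hinc : ∀ i ω, η i ω ∈ Set.Icc (-M) M →
      (-Γ (s i ω) + ∫ a in (s i ω + η i ω)..(s i ω), (P a - phat)) = X i ω := by
    intro i ω hω
    rw [hΓ' _ (hs_ge i ω), hkeyint phat _ _ (hs_ge i ω) hω]
    simp only [hXdef]
    ring
  have hMexX : ∀ n, Mex n =ᵐ[prob] fun ω => ∑ i ∈ Finset.range n, X i ω := by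
    intro n
    filter_upwards [hηIcc_all] with ω hω
    rw [hMex n ω]
    exact Finset.sum_congr rfl fun i _ => hinc i ω (hω i)
  have hXbd : ∀ i, ∀ᵐ ω ∂prob, ‖X i ω‖ ≤ C₂ := by
    intro i
    filter_upwards [hηIcc i] with ω hω
    rw [Real.norm_eq_abs]
    exact hFbd (s i ω) (η i ω) (abs_le.2 ⟨hω.1, hω.2⟩)
  have hX_meas : ∀ i, StronglyMeasurable[ℱ (i + 1)] (X i) := by
    intro i
    have hsm : Measurable[ℱ (i + 1)] (s i) := (hs_meas i).mono (ℱ.mono (Nat.le_succ i)) le_rfl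
    have h1 : Measurable[ℱ (i + 1)] fun ω => ΦD (s i ω) := hΦDcont.measurable.comp hsm
    have h2 : Measurable[ℱ (i + 1)] fun ω => Φ (s i ω + η i ω) :=
      hΦcont.measurable.comp (hsm.add (hη_meas i))
    have h3 : Measurable[ℱ (i + 1)] fun ω => phat * η i ω := (hη_meas i).const_mul phat
    exact ((h1.sub h2).add h3).stronglyMeasurable
  have hX_int : ∀ i, Integrable (X i) prob := by
    intro i
    refine Integrable.mono' (integrable_const C₂) ?_ (hXbd i)
    exact ((hX_meas i).mono (ℱ.le _)).aestronglyMeasurable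
  -- adaptedness
  have hadp : StronglyAdapted ℱ Mex := by
    intro n
    have heq : Mex n = fun ω => ∑ i ∈ Finset.range n,
        (-Γ (s i ω) + ∫ a in (s i ω + η i ω)..(s i ω), (P a - phat)) := funext (hMex n)
    rw [heq]
    apply Measurable.stronglyMeasurable
    apply Finset.measurable_sum
    intro i hi
    have hi' : i + 1 ≤ n := Finset.mem_range.1 hi
    have hsm : Measurable[ℱ n] (s i) :=
      (hs_meas i).mono (ℱ.mono (le_trans (Nat.le_succ i) hi')) le_rfl
    have hηm : Measurable[ℱ n] (η i) := (hη_meas i).mono (ℱ.mono hi') le_rfl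
    have hΓm : Measurable[ℱ n] fun ω => -Γ (s i ω) := by
      have heq2 : (fun ω => -Γ (s i ω)) = fun ω => -(Φ (s i ω) - ΦD (s i ω)) :=
        funext fun ω => by rw [hΓ' _ (hs_ge i ω)]
      rw [heq2]
      exact ((hΦcont.measurable.comp hsm).sub (hΦDcont.measurable.comp hsm)).neg
    have hIm : Measurable[ℱ n] fun ω => ∫ a in (s i ω + η i ω)..(s i ω), (P a - phat) :=
      meas_comp_intervalIntegral hδ0 (hPcont.sub continuousOn_const) (hsm.add hηm) hsm (hs_ge i)
    exact hΓm.add hIm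
  have hMex_int : ∀ n, Integrable (Mex n) prob := fun n =>
    Integrable.congr (integrable_finset_sum (Finset.range n) fun i _ => hX_int i) (hMexX n).symm
  -- the key vanishing set-integral, via independence and the product measure
  have hFcont : Continuous fun q : ℝ × ℝ => ΦD q.1 - Φ (q.1 + q.2) + phat * q.2 :=
    ((hΦDcont.comp continuous_fst).sub (hΦcont.comp (continuous_fst.add continuous_snd))).add
      (continuous_const.mul continuous_snd)
  have hkey : ∀ i (A : Set Ω), MeasurableSet[ℱ i] A → ∫ ω in A, X i ω ∂prob = 0 := by
    intro i A hA
    have h := key_setIntegral_zero prob (ℱ.le i) D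
      (F := fun q : ℝ × ℝ => ΦD q.1 - Φ (q.1 + q.2) + phat * q.2) hFcont hC₂nonneg
      (hs_meas i) (hη_m0 i) (hη_indep i) (hη_law i) measurableSet_Icc hsupp
      (fun x e he => hFbd x e (abs_le.2 ⟨he.1, he.2⟩)) (fun x => hzero x) hA
    exact h
  -- one-step set-integral identity
  have hstep : ∀ i (A : Set Ω), MeasurableSet[ℱ i] A →
      ∫ ω in A, Mex (i + 1) ω ∂prob = ∫ ω in A, Mex i ω ∂prob := by
    intro i A hA
    have hAm0 : MeasurableSet A := ℱ.le i A hA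
    have hsucc : Mex (i + 1) =ᵐ[prob] fun ω => Mex i ω + X i ω := by
      filter_upwards [hηIcc i] with ω hω
      rw [hMex (i + 1) ω, Finset.sum_range_succ, ← hMex i ω, hinc i ω hω]
    calc ∫ ω in A, Mex (i + 1) ω ∂prob = ∫ ω in A, (Mex i ω + X i ω) ∂prob :=
        setIntegral_congr_ae hAm0 (hsucc.mono fun ω h _ => h)
      _ = (∫ ω in A, Mex i ω ∂prob) + ∫ ω in A, X i ω ∂prob :=
        integral_add ((hMex_int i).integrableOn) ((hX_int i).integrableOn)
      _ = ∫ ω in A, Mex i ω ∂prob := by rw [hkey i A hA, add_zero]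
  have hmart : Martingale Mex ℱ prob := by
    rw [martingale_iff]
    constructor
    · have hsub : Submartingale (-Mex) ℱ prob := by
        refine submartingale_of_setIntegral_le_succ hadp.neg (fun i => (hMex_int i).neg) ?_
        intro i A hA
        simp only [Pi.neg_apply]
        rw [MeasureTheory.integral_neg, MeasureTheory.integral_neg]
        exact neg_le_neg (hstep i A hA).le
      have h := hsub.neg
      rwa [neg_neg] at h
    · exact submartingale_of_setIntegral_le_succ hadp hMex_int
        (fun i A hA => (hstep i A hA).symm.le)
  have hMex0 : ∀ ω, Mex 0 ω = 0 := by
    intro ω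
    rw [hMex 0 ω]
    simp
  refine ⟨hmart, hMex0, ?_⟩
  rintro τ hτ ⟨N, hN⟩
  have hintN : ∫ ω, Mex N ω ∂prob = 0 := by
    have h0 : ∫ ω, Mex 0 ω ∂prob = 0 := by
      rw [show Mex 0 = fun _ => (0:ℝ) from funext hMex0]
      exact MeasureTheory.integral_zero _ _
    have h := hmart.setIntegral_eq (Nat.zero_le N) (MeasurableSet.univ)
    rw [setIntegral_univ, setIntegral_univ] at h
    rw [← h, h0]
  have hle1 : ∫ ω, stoppedValue Mex (fun ω => (τ ω : WithTop ℕ)) ω ∂prob ≤ ∫ ω, stoppedValue Mex (fun _ => N) ω ∂prob :=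
    hmart.submartingale.expected_stoppedValue_mono hτ (isStoppingTime_const ℱ N)
      (fun ω => WithTop.coe_le_coe.2 (hN ω)) (fun _ => le_rfl)
  have hle2 : ∫ ω, stoppedValue (-Mex) (fun ω => (τ ω : WithTop ℕ)) ω ∂prob
      ≤ ∫ ω, stoppedValue (-Mex) (fun _ => N) ω ∂prob :=
    hmart.neg.submartingale.expected_stoppedValue_mono hτ (isStoppingTime_const ℱ N)
      (fun ω => WithTop.coe_le_coe.2 (hN ω)) (fun _ => le_rfl)
  have hsvN : ∫ ω, stoppedValue Mex (fun _ => N) ω ∂prob = 0 := hintN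
  have hsvNneg : ∫ ω, stoppedValue (-Mex) (fun _ => N) ω ∂prob = 0 := by
    have h : (fun ω => stoppedValue (-Mex) (fun _ => N) ω) = fun ω => -(Mex N ω) := rfl
    rw [h, MeasureTheory.integral_neg, hintN, neg_zero]
  have hneg : ∫ ω, stoppedValue (-Mex) (fun ω => (τ ω : WithTop ℕ)) ω ∂prob = - ∫ ω, stoppedValue Mex (fun ω => (τ ω : WithTop ℕ)) ω ∂prob := by
    have h : (fun ω => stoppedValue (-Mex) (fun ω => (τ ω : WithTop ℕ)) ω) = fun ω => -(stoppedValue Mex (fun ω => (τ ω : WithTop ℕ)) ω) := rfl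
    rw [h, MeasureTheory.integral_neg]
  have hfinal : ∫ ω, stoppedValue Mex (fun ω => (τ ω : WithTop ℕ)) ω ∂prob = 0 := by
    rw [hsvN] at hle1
    rw [hneg, hsvNneg] at hle2
    linarith
  exact hfinal
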